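/- Let Γ be a countable group. The set HT(Γ) of subgroups Λ ≤ Γ of infinite index such that the right-translation action of Γ on the coset space Λ\Γ is highly transitive is a G_δ subset of Sub(Γ). -/

import Mathlib

/-- The Chabauty topology on the space of subgroups of `Γ`: the topology induced by the
injection `Sub(Γ) → {0,1}^Γ` (indicator functions), where `{0,1}^Γ` carries the product
of the discrete topologies. -/
instance chabauty (Γ : Type*) [Group Γ] : TopologicalSpace (Subgroup Γ) :=
  TopologicalSpace.induced (fun (H : Subgroup Γ) (g : Γ) => g ∈ H)
    (@Pi.topologicalSpace Γ (fun _ => Prop) (fun _ => ⊥))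

/-- The space of right cosets `Λ\Γ`. -/
def rQuot {Γ : Type*} [Group Γ] (Λ : Subgroup Γ) : Type _ :=
  Quotient (QuotientGroup.rightRel Λ)

/-- The right-translation action of `Γ` on the right coset space `Λ\Γ`:
`Λx · γ = Λxγ`. -/
def rAct {Γ : Type*} [Group Γ] (Λ : Subgroup Γ) (γ : Γ) : rQuot Λ → rQuot Λ :=
  Quotient.map' (fun x => x * γ) (by
    intro x y h
    rw [QuotientGroup.rightRel_apply] at h ⊢
    have key : y * γ * (x * γ)⁻¹ = y * x⁻¹ := by group
    rw [key]; exact h)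

/-- The right-translation action of `Γ` on `Λ\Γ` is highly transitive: for every `d ≥ 1`,
any `d`-tuple of pairwise distinct cosets can be mapped to any other by some `γ ∈ Γ`. -/
def HTcoset {Γ : Type*} [Group Γ] (Λ : Subgroup Γ) : Prop :=
  ∀ d : ℕ, 1 ≤ d → ∀ x y : Fin d → rQuot Λ,
    Function.Injective x → Function.Injective y →
    ∃ γ : Γ, ∀ i, rAct Λ γ (x i) = y i

/-- `HT(Γ)`: the set of infinite index subgroups `Λ ≤ Γ` whose right-translation action
on `Λ\Γ` is highly transitive. -/
def HTset (Γ : Type*) [Group Γ] : Set (Subgroup Γ) :=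
  {Λ | Infinite (rQuot Λ) ∧ HTcoset Λ}

namespace HTaux

variable {Γ : Type*} [Group Γ]

lemma chab_isOpen (g : Γ) (S : Set Prop) :
    IsOpen {Λ : Subgroup Γ | (g ∈ Λ) ∈ S} := by
  letI tP : TopologicalSpace (Γ → Prop) := @Pi.topologicalSpace Γ (fun _ => Prop) (fun _ => ⊥)
  have h2 : @IsOpen (Γ → Prop) tP ((fun (p : Γ → Prop) => p g) ⁻¹' S) :=
    @Continuous.isOpen_preimage _ _ tP ⊥ _
      (@continuous_apply Γ (fun _ => Prop) (fun _ => ⊥) g) S trivial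
  exact @isOpen_induced (Subgroup Γ) (Γ → Prop) tP (fun H g => g ∈ H) _ h2

lemma chab_isOpen_mem (g : Γ) : IsOpen {Λ : Subgroup Γ | g ∈ Λ} :=
  chab_isOpen g {p | p}

lemma chab_isOpen_notMem (g : Γ) : IsOpen {Λ : Subgroup Γ | g ∉ Λ} :=
  chab_isOpen g {p | ¬ p}

lemma chab_isClosed_notMem (g : Γ) : IsClosed {Λ : Subgroup Γ | g ∉ Λ} := by
  rw [← isOpen_compl_iff]
  have : {Λ : Subgroup Γ | g ∉ Λ}ᶜ = {Λ : Subgroup Γ | g ∈ Λ} := by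
    ext Λ; simp
  rw [this]; exact chab_isOpen_mem g

/-- representative map -/
def rmk (Λ : Subgroup Γ) (a : Γ) : rQuot Λ := Quotient.mk'' a

lemma rmk_eq (Λ : Subgroup Γ) {a b : Γ} : rmk Λ a = rmk Λ b ↔ b * a⁻¹ ∈ Λ := by
  show (Quotient.mk'' a : Quotient (QuotientGroup.rightRel Λ)) = Quotient.mk'' b ↔ b * a⁻¹ ∈ Λ
  rw [Quotient.eq'']
  exact QuotientGroup.rightRel_apply

lemma rmk_surj (Λ : Subgroup Γ) : Function.Surjective (rmk Λ) :=
  fun q => Quotient.inductionOn' q fun a => ⟨a, rfl⟩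

lemma rAct_rmk (Λ : Subgroup Γ) (γ a : Γ) : rAct Λ γ (rmk Λ a) = rmk Λ (a * γ) := rfl

/-- `x` represents pairwise distinct right cosets of `Λ`. -/
def dc (Λ : Subgroup Γ) {d : ℕ} (x : Fin d → Γ) : Prop :=
  ∀ i j : Fin d, i ≠ j → x j * (x i)⁻¹ ∉ Λ

lemma dc_iff_injective (Λ : Subgroup Γ) {d : ℕ} (x : Fin d → Γ) :
    dc Λ x ↔ Function.Injective (fun i => rmk Λ (x i)) := by
  constructor
  · intro h i j hij
    by_contra hne
    exact h i j hne ((rmk_eq Λ).mp hij)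
  · intro h i j hne hmem
    exact hne (h ((rmk_eq Λ).mpr hmem))

lemma isOpen_dc {d : ℕ} (x : Fin d → Γ) : IsOpen {Λ : Subgroup Γ | dc Λ x} := by
  have : {Λ : Subgroup Γ | dc Λ x} =
      ⋂ i, ⋂ j, ⋂ (_ : i ≠ j), {Λ : Subgroup Γ | x j * (x i)⁻¹ ∉ Λ} := by
    ext Λ; simp [dc]
  rw [this]
  exact isOpen_iInter_of_finite fun i => isOpen_iInter_of_finite fun j =>
    isOpen_iInter_of_finite fun _ => chab_isOpen_notMem _

lemma isClosed_dc {d : ℕ} (x : Fin d → Γ) : IsClosed {Λ : Subgroup Γ | dc Λ x} := by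
  have : {Λ : Subgroup Γ | dc Λ x} =
      ⋂ i, ⋂ j, ⋂ (_ : i ≠ j), {Λ : Subgroup Γ | x j * (x i)⁻¹ ∉ Λ} := by
    ext Λ; simp [dc]
  rw [this]
  exact isClosed_iInter fun i => isClosed_iInter fun j =>
    isClosed_iInter fun _ => chab_isClosed_notMem _

lemma infinite_iff (Λ : Subgroup Γ) :
    Infinite (rQuot Λ) ↔ ∀ n : ℕ, ∃ x : Fin n → Γ, dc Λ x := by
  constructor
  · intro h n
    have e : Fin n ↪ rQuot Λ := (Fin.valEmbedding).trans (Infinite.natEmbedding _)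
    choose x hx using fun i => rmk_surj Λ (e i)
    refine ⟨x, (dc_iff_injective Λ x).mpr ?_⟩
    intro i j hij
    apply e.injective
    rw [← hx i, ← hx j]
    exact hij
  · intro h
    by_contra hfin
    have hF : Finite (rQuot Λ) := not_infinite_iff_finite.mp hfin
    obtain ⟨x, hx⟩ := h (Nat.card (rQuot Λ) + 1)
    have hinj := (dc_iff_injective Λ x).mp hx
    have hle := Nat.card_le_card_of_injective _ hinj
    simp [Nat.card_eq_fintype_card] at hle

lemma htcoset_iff (Λ : Subgroup Γ) :
    HTcoset Λ ↔ ∀ (d : ℕ) (x y : Fin d → Γ), dc Λ x → dc Λ y →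
      ∃ γ : Γ, ∀ i, y i * (x i * γ)⁻¹ ∈ Λ := by
  constructor
  · intro h d x y hx hy
    rcases Nat.eq_zero_or_pos d with rfl | hd
    · exact ⟨1, fun i => i.elim0⟩
    obtain ⟨γ, hγ⟩ := h d hd (fun i => rmk Λ (x i)) (fun i => rmk Λ (y i))
      ((dc_iff_injective Λ x).mp hx) ((dc_iff_injective Λ y).mp hy)
    refine ⟨γ, fun i => ?_⟩
    have := hγ i
    rw [rAct_rmk] at this
    exact (rmk_eq Λ).mp this
  · intro h d hd x y hx hy
    choose a ha using fun i => rmk_surj Λ (x i)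
    choose b hb using fun i => rmk_surj Λ (y i)
    have hda : dc Λ a := (dc_iff_injective Λ a).mpr (by
      intro i j hij
      apply hx
      rw [← ha i, ← ha j]; exact hij)
    have hdb : dc Λ b := (dc_iff_injective Λ b).mpr (by
      intro i j hij
      apply hy
      rw [← hb i, ← hb j]; exact hij)
    obtain ⟨γ, hγ⟩ := h d a b hda hdb
    refine ⟨γ, fun i => ?_⟩
    rw [← ha i, ← hb i, rAct_rmk]
    exact (rmk_eq Λ).mpr (hγ i)

lemma isOpen_A {d : ℕ} (x y : Fin d → Γ) :
    IsOpen {Λ : Subgroup Γ | dc Λ x → dc Λ y →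
      ∃ γ : Γ, ∀ i, y i * (x i * γ)⁻¹ ∈ Λ} := by
  have heq : {Λ : Subgroup Γ | dc Λ x → dc Λ y →
      ∃ γ : Γ, ∀ i, y i * (x i * γ)⁻¹ ∈ Λ} =
      ({Λ : Subgroup Γ | dc Λ x} ∩ {Λ : Subgroup Γ | dc Λ y})ᶜ ∪
      (⋃ γ : Γ, ⋂ i, {Λ : Subgroup Γ | y i * (x i * γ)⁻¹ ∈ Λ}) := by
    ext Λ
    simp only [Set.mem_setOf_eq, Set.mem_union, Set.mem_compl_iff, Set.mem_inter_iff,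
      Set.mem_iUnion, Set.mem_iInter, not_and]
    tauto
  rw [heq]
  refine IsOpen.union ?_ (isOpen_iUnion fun γ =>
    isOpen_iInter_of_finite fun i => chab_isOpen_mem _)
  exact (IsClosed.inter (isClosed_dc x) (isClosed_dc y)).isOpen_compl

end HTaux

open HTaux in
theorem isGδ_HTset (Γ : Type*) [Group Γ] [Countable Γ] : IsGδ (HTset Γ) := by
  have hset : HTset Γ =
      (⋂ n : ℕ, ⋃ x : Fin n → Γ, {Λ : Subgroup Γ | dc Λ x}) ∩
      (⋂ d : ℕ, ⋂ x : Fin d → Γ, ⋂ y : Fin d → Γ,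
        {Λ : Subgroup Γ | dc Λ x → dc Λ y →
          ∃ γ : Γ, ∀ i, y i * (x i * γ)⁻¹ ∈ Λ}) := by
    ext Λ
    simp only [HTset, Set.mem_setOf_eq, Set.mem_inter_iff, Set.mem_iInter, Set.mem_iUnion,
      infinite_iff, htcoset_iff]
  rw [hset]
  refine IsGδ.inter ?_ ?_
  · exact .iInter fun n => (isOpen_iUnion fun x => isOpen_dc x).isGδ
  · exact .iInter fun d => .iInter fun x => .iInter fun y => (isOpen_A x y).isGδ
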